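/- Let f : ℝⁿ × ℝᵐ → ℝⁿ, φ : ℝⁿ × ℝᵐ → ℝᵏ, and L : ℝⁿ × ℝᵐ → ℝ be continuously differentiable. Suppose q₀, q₁, p₀, p₁ ∈ ℝⁿ and internal stages Qⁱ, Pⁱ ∈ ℝⁿ, Uⁱ ∈ ℝᵐ, Λⁱ ∈ ℝᵏ (i = 1,…,s) satisfy: q₁ = q₀ + Δt·Σᵢ bᵢ f(Qⁱ,Uⁱ); Qⁱ = q₀ + Δt·Σⱼ aᵢⱼ f(Qʲ,Uʲ); p₁ = p₀ − Δt·Σᵢ bᵢ ( D_qf(Qⁱ,Uⁱ)ᵀ Pⁱ + D_qφ(Qⁱ,Uⁱ)ᵀ Λⁱ + ∇_qL(Qⁱ,Uⁱ) ); Pⁱ = p₀ − Δt·Σⱼ ãᵢⱼ ( D_qf(Qʲ,Uʲ)ᵀ Pʲ + D_qφ(Qʲ,Uʲ)ᵀ Λʲ + ∇_qL(Qʲ,Uʲ) ); 0 = φ(Qⁱ,Uⁱ); 0 = D_uf(Qⁱ,Uⁱ)ᵀ Pⁱ + D_uφ(Qⁱ,Uⁱ)ᵀ Λⁱ + ∇_uL(Qⁱ,Uⁱ).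 Suppose further that δq₀, δq₁, δQⁱ ∈ ℝⁿ and δUⁱ ∈ ℝᵐ satisfy: δq₁ = δq₀ + Δt·Σᵢ bᵢ ( D_qf(Qⁱ,Uⁱ) δQⁱ + D_uf(Qⁱ,Uⁱ) δUⁱ ); δQⁱ = δq₀ + Δt·Σⱼ aᵢⱼ ( D_qf(Qʲ,Uʲ) δQʲ + D_uf(Qʲ,Uʲ) δUʲ ); 0 = D_qφ(Qⁱ,Uⁱ) δQⁱ + D_uφ(Qⁱ,Uⁱ) δUⁱ. Then ⟨p₁, δq₁⟩ = ⟨p₀, δq₀⟩ − Δt·Σᵢ bᵢ ( ⟨∇_qL(Qⁱ,Uⁱ), δQⁱ⟩ + ⟨∇_uL(Qⁱ,Uⁱ), δUⁱ⟩ ). -/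
import Mathlib


open scoped RealInnerProductSpace

noncomputable section

abbrev Euc (n : ℕ) : Type := EuclideanSpace ℝ (Fin n)

/-- Partial Jacobian `D_qF(q,u)` with respect to the first argument. -/
noncomputable def Dq {n m k : ℕ} (F : Euc n × Euc m → Euc k) (q : Euc n) (u : Euc m) :
    Euc n →L[ℝ] Euc k :=
  fderiv ℝ (fun q' => F (q', u)) q

/-- Partial Jacobian `D_uF(q,u)` with respect to the second argument. -/
noncomputable def Du {n m k : ℕ} (F : Euc n × Euc m → Euc k) (q : Euc n) (u : Euc m) :
    Euc m →L[ℝ] Euc k :=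
  fderiv ℝ (fun u' => F (q, u')) u

/-- `D_qF(q,u)ᵀ`, the transpose (adjoint) of the partial Jacobian in `q`. -/
noncomputable def DqT {n m k : ℕ} (F : Euc n × Euc m → Euc k) (q : Euc n) (u : Euc m) :
    Euc k →L[ℝ] Euc n :=
  ContinuousLinearMap.adjoint (Dq F q u)

/-- `D_uF(q,u)ᵀ`, the transpose (adjoint) of the partial Jacobian in `u`. -/
noncomputable def DuT {n m k : ℕ} (F : Euc n × Euc m → Euc k) (q : Euc n) (u : Euc m) :
    Euc k →L[ℝ] Euc m :=
  ContinuousLinearMap.adjoint (Du F q u)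

/-- Partial gradient `∇_qL(q,u)`. -/
noncomputable def gradQ {n m : ℕ} (L : Euc n × Euc m → ℝ) (q : Euc n) (u : Euc m) : Euc n :=
  gradient (fun q' => L (q', u)) q

/-- Partial gradient `∇_uL(q,u)`. -/
noncomputable def gradU {n m : ℕ} (L : Euc n × Euc m → ℝ) (q : Euc n) (u : Euc m) : Euc m :=
  gradient (fun u' => L (q, u')) u

/-- the presymplectic partitioned Runge–Kutta discretization of the
augmented adjoint DAE system satisfies the discrete identity
`⟨p₁, δq₁⟩ = ⟨p₀, δq₀⟩ − Δt Σᵢ bᵢ (⟨∇_qL(Qⁱ,Uⁱ), δQⁱ⟩ + ⟨∇_uL(Qⁱ,Uⁱ), δUⁱ⟩)`. -/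
theorem discrete_augmented_adjoint_DAE_quadratic_identity {n m k s : ℕ} (hs : 1 ≤ s)
    (f : Euc n × Euc m → Euc n) (φ : Euc n × Euc m → Euc k) (L : Euc n × Euc m → ℝ)
    (hf : ContDiff ℝ 1 f) (hφ : ContDiff ℝ 1 φ) (hL : ContDiff ℝ 1 L)
    (Δt : ℝ) (hΔt : 0 < Δt)
    (a a' : Fin s → Fin s → ℝ) (b : Fin s → ℝ)
    (hsym : ∀ i j, b i * a' i j + b j * a j i = b i * b j)
    (q₀ q₁ p₀ p₁ : Euc n) (Q P : Fin s → Euc n) (U : Fin s → Euc m) (Λ : Fin s → Euc k)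
    (hq1 : q₁ = q₀ + Δt • ∑ i, b i • f (Q i, U i))
    (hQ : ∀ i, Q i = q₀ + Δt • ∑ j, a i j • f (Q j, U j))
    (hp1 : p₁ = p₀ - Δt • ∑ i, b i •
      (DqT f (Q i) (U i) (P i) + DqT φ (Q i) (U i) (Λ i) + gradQ L (Q i) (U i)))
    (hP : ∀ i, P i = p₀ - Δt • ∑ j, a' i j •
      (DqT f (Q j) (U j) (P j) + DqT φ (Q j) (U j) (Λ j) + gradQ L (Q j) (U j)))
    (hconstr : ∀ i, φ (Q i, U i) = 0)
    (hadj : ∀ i, DuT f (Q i) (U i) (P i) + DuT φ (Q i) (U i) (Λ i)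
      + gradU L (Q i) (U i) = 0)
    (δq₀ δq₁ : Euc n) (δQ : Fin s → Euc n) (δU : Fin s → Euc m)
    (hδq1 : δq₁ = δq₀ + Δt • ∑ i, b i •
      (Dq f (Q i) (U i) (δQ i) + Du f (Q i) (U i) (δU i)))
    (hδQ : ∀ i, δQ i = δq₀ + Δt • ∑ j, a i j •
      (Dq f (Q j) (U j) (δQ j) + Du f (Q j) (U j) (δU j)))
    (hδconstr : ∀ i, Dq φ (Q i) (U i) (δQ i) + Du φ (Q i) (U i) (δU i) = 0) :
    ⟪p₁, δq₁⟫ = ⟪p₀, δq₀⟫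
      - Δt * ∑ i, b i * (⟪gradQ L (Q i) (U i), δQ i⟫ + ⟪gradU L (Q i) (U i), δU i⟫) := by
  classical
  -- abbreviations
  set Gv : Fin s → Euc n := fun i =>
    DqT f (Q i) (U i) (P i) + DqT φ (Q i) (U i) (Λ i) + gradQ L (Q i) (U i) with hGv
  set dFv : Fin s → Euc n := fun i =>
    Dq f (Q i) (U i) (δQ i) + Du f (Q i) (U i) (δU i) with hdFv
  have hGvi : ∀ i, Gv i =
      DqT f (Q i) (U i) (P i) + DqT φ (Q i) (U i) (Λ i) + gradQ L (Q i) (U i) := fun i => rfl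
  have hdFvi : ∀ i, dFv i =
      Dq f (Q i) (U i) (δQ i) + Du f (Q i) (U i) (δU i) := fun i => rfl
  -- stage identity
  have hstage : ∀ i, ⟪P i, dFv i⟫ - ⟪Gv i, δQ i⟫
      = -(⟪gradQ L (Q i) (U i), δQ i⟫ + ⟪gradU L (Q i) (U i), δU i⟫) := by
    intro i
    have h1 : ⟪DuT f (Q i) (U i) (P i), δU i⟫ + ⟪DuT φ (Q i) (U i) (Λ i), δU i⟫
        + ⟪gradU L (Q i) (U i), δU i⟫ = 0 := by
      rw [← inner_add_left, ← inner_add_left, hadj i, inner_zero_left]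
    have h2 : ⟪Λ i, Dq φ (Q i) (U i) (δQ i)⟫ + ⟪Λ i, Du φ (Q i) (U i) (δU i)⟫ = 0 := by
      rw [← inner_add_right, hδconstr i, inner_zero_right]
    have a1 : ⟪DuT f (Q i) (U i) (P i), δU i⟫ = ⟪P i, Du f (Q i) (U i) (δU i)⟫ :=
      ContinuousLinearMap.adjoint_inner_left _ _ _
    have a2 : ⟪DuT φ (Q i) (U i) (Λ i), δU i⟫ = ⟪Λ i, Du φ (Q i) (U i) (δU i)⟫ :=
      ContinuousLinearMap.adjoint_inner_left _ _ _
    have a3 : ⟪DqT f (Q i) (U i) (P i), δQ i⟫ = ⟪P i, Dq f (Q i) (U i) (δQ i)⟫ :=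
      ContinuousLinearMap.adjoint_inner_left _ _ _
    have a4 : ⟪DqT φ (Q i) (U i) (Λ i), δQ i⟫ = ⟪Λ i, Dq φ (Q i) (U i) (δQ i)⟫ :=
      ContinuousLinearMap.adjoint_inner_left _ _ _
    rw [hGvi i, hdFvi i, inner_add_right, inner_add_left, inner_add_left, a3, a4]
    linarith [h1, h2, a1, a2]
  -- rewritten hypotheses
  have hp1' : p₁ = p₀ - Δt • ∑ i, b i • Gv i := hp1
  have hδq1' : δq₁ = δq₀ + Δt • ∑ i, b i • dFv i := hδq1
  have hP' : ∀ i, P i = p₀ - Δt • ∑ j, a' i j • Gv j := hP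
  have hδQ' : ∀ i, δQ i = δq₀ + Δt • ∑ j, a i j • dFv j := hδQ
  -- scalar expansions of the stage relations
  have hG_dQ : ∀ i, ⟪Gv i, δQ i⟫ = ⟪Gv i, δq₀⟫ + Δt * ∑ j, a i j * ⟪Gv i, dFv j⟫ := by
    intro i
    rw [hδQ' i, inner_add_right, real_inner_smul_right, inner_sum]
    simp_rw [real_inner_smul_right]
  have hP_dF : ∀ i, ⟪P i, dFv i⟫ = ⟪p₀, dFv i⟫ - Δt * ∑ j, a' i j * ⟪Gv j, dFv i⟫ := by
    intro i
    rw [hP' i, inner_sub_left, real_inner_smul_left, sum_inner]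
    simp_rw [real_inner_smul_left]
  -- expansion of the endpoint pairing
  have e1 : ⟪p₁, δq₁⟫ = ⟪p₀, δq₀⟫ + Δt * ∑ i, b i * ⟪p₀, dFv i⟫
      - Δt * ∑ i, b i * ⟪Gv i, δq₀⟫
      - Δt * Δt * ∑ i, b i * ∑ j, b j * ⟪Gv i, dFv j⟫ := by
    have t1 : ⟪p₀, ∑ i, b i • dFv i⟫ = ∑ i, b i * ⟪p₀, dFv i⟫ := by
      rw [inner_sum]; simp_rw [real_inner_smul_right]
    have t2 : ⟪∑ i, b i • Gv i, δq₀⟫ = ∑ i, b i * ⟪Gv i, δq₀⟫ := by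
      rw [sum_inner]; simp_rw [real_inner_smul_left]
    have t3 : ⟪∑ i, b i • Gv i, ∑ j, b j • dFv j⟫
        = ∑ i, b i * ∑ j, b j * ⟪Gv i, dFv j⟫ := by
      simp_rw [sum_inner, real_inner_smul_left, inner_sum, real_inner_smul_right]
    rw [hp1', hδq1', inner_sub_left, inner_add_right, inner_add_right]
    simp only [real_inner_smul_left, real_inner_smul_right]
    rw [t1, t2, t3]
    ring
  -- symmetry relation on the double sum
  have hkey : ∑ i, b i * ∑ j, b j * ⟪Gv i, dFv j⟫
      = (∑ i, b i * ∑ j, a i j * ⟪Gv i, dFv j⟫)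
        + ∑ i, b i * ∑ j, a' i j * ⟪Gv j, dFv i⟫ := by
    have hswap : ∑ i, ∑ j, b j * (a' j i * ⟪Gv i, dFv j⟫)
        = ∑ i, b i * ∑ j, a' i j * ⟪Gv j, dFv i⟫ := by
      rw [Finset.sum_comm]
      simp_rw [Finset.mul_sum]
    calc ∑ i, b i * ∑ j, b j * ⟪Gv i, dFv j⟫
        = ∑ i, ∑ j, b i * (b j * ⟪Gv i, dFv j⟫) := by simp_rw [Finset.mul_sum]
      _ = ∑ i, ∑ j, (b i * (a i j * ⟪Gv i, dFv j⟫) + b j * (a' j i * ⟪Gv i, dFv j⟫)) := by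
          refine Finset.sum_congr rfl fun i _ => Finset.sum_congr rfl fun j _ => ?_
          linear_combination (-⟪Gv i, dFv j⟫) * hsym j i
      _ = (∑ i, ∑ j, b i * (a i j * ⟪Gv i, dFv j⟫))
            + ∑ i, ∑ j, b j * (a' j i * ⟪Gv i, dFv j⟫) := by
          simp_rw [Finset.sum_add_distrib]
      _ = (∑ i, b i * ∑ j, a i j * ⟪Gv i, dFv j⟫)
            + ∑ i, b i * ∑ j, a' i j * ⟪Gv j, dFv i⟫ := by
          rw [hswap]; simp_rw [Finset.mul_sum]
  -- expansion of the right-hand side sum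
  have hsum : ∑ i, b i * (⟪gradQ L (Q i) (U i), δQ i⟫ + ⟪gradU L (Q i) (U i), δU i⟫)
      = (∑ i, b i * ⟪Gv i, δq₀⟫)
        + Δt * (∑ i, b i * ∑ j, a i j * ⟪Gv i, dFv j⟫)
        - ∑ i, b i * ⟪p₀, dFv i⟫
        + Δt * ∑ i, b i * ∑ j, a' i j * ⟪Gv j, dFv i⟫ := by
    calc ∑ i, b i * (⟪gradQ L (Q i) (U i), δQ i⟫ + ⟪gradU L (Q i) (U i), δU i⟫)
        = ∑ i, (b i * ⟪Gv i, δq₀⟫ + Δt * (b i * ∑ j, a i j * ⟪Gv i, dFv j⟫)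
            - b i * ⟪p₀, dFv i⟫ + Δt * (b i * ∑ j, a' i j * ⟪Gv j, dFv i⟫)) := by
          refine Finset.sum_congr rfl fun i _ => ?_
          linear_combination b i * hstage i + b i * hG_dQ i - b i * hP_dF i
      _ = _ := by
          rw [Finset.sum_add_distrib, Finset.sum_sub_distrib, Finset.sum_add_distrib,
            ← Finset.mul_sum, ← Finset.mul_sum]
  linear_combination e1 + Δt * hsum - Δt * Δt * hkey

end
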